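/- Let (Ω, ⪯) be a linear order, E = {(u,v) : u ⪯ v}, and {A(u,v)}_{(u,v)∈E} ⊆ B(X) a family of dissipative bounded operators on a Banach space satisfying additivity: A(u,w) = A(u,v) + A(v,w) for u ⪯ v ⪯ w. Then for all u' ⪯ u ⪯ v ⪯ v': ‖e^{A(u',v')} − e^{A(u,v)}‖ ≤ ‖A(u',u)‖ + ‖A(v,v')‖. -/

import Mathlib

open NormedSpace Nat

section Aux
variable {𝔸 : Type*} [NormedRing 𝔸] [NormedAlgebra ℝ 𝔸] [CompleteSpace 𝔸]

theorem exp_remainder_bound (Z : 𝔸) :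
    ‖exp Z - 1 - Z‖ ≤ ‖Z‖ ^ 2 * Real.exp ‖Z‖ := by
  have hs : Summable fun n : ℕ => ((n ! : ℝ))⁻¹ • Z ^ n := expSeries_summable' Z
  have key : exp Z - 1 - Z = ∑' n : ℕ, (((n + 2)! : ℝ))⁻¹ • Z ^ (n + 2) := by
    have h := Summable.sum_add_tsum_nat_add' (k := 2) ((summable_nat_add_iff 2).mpr hs)
    rw [exp_eq_tsum (𝕂 := ℝ)]
    simp [Finset.sum_range_succ] at h ⊢
    rw [← h]
    abel
  rw [key]
  have hb : ∀ n : ℕ, ‖(((n + 2)! : ℝ))⁻¹ • Z ^ (n + 2)‖ ≤ ‖Z‖ ^ 2 * (‖Z‖ ^ n / n !) := by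
    intro n
    rw [norm_smul]
    have h1 : ‖Z ^ (n + 2)‖ ≤ ‖Z‖ ^ (n + 2) := norm_pow_le' Z (by omega)
    have h2 : ((n ! : ℝ))⁻¹ ≥ (((n + 2)! : ℝ))⁻¹ := by
      apply inv_anti₀
      · positivity
      · exact_mod_cast Nat.factorial_le (by omega)
    have h3 : ‖(((n+2)!⁻¹ : ℝ))‖ = (((n + 2)! : ℝ))⁻¹ := by
      rw [Real.norm_eq_abs, abs_of_nonneg]; positivity
    rw [h3]
    calc (((n + 2)! : ℝ))⁻¹ * ‖Z ^ (n+2)‖ ≤ ((n ! : ℝ))⁻¹ * ‖Z‖ ^ (n + 2) := by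
            apply mul_le_mul h2 h1 (norm_nonneg _) (by positivity)
      _ = ‖Z‖ ^ 2 * (‖Z‖ ^ n / n !) := by ring
  have hsum : Summable fun n : ℕ => ‖Z‖ ^ 2 * (‖Z‖ ^ n / n !) :=
    (Real.summable_pow_div_factorial ‖Z‖).mul_left _
  calc ‖∑' n : ℕ, (((n + 2)! : ℝ))⁻¹ • Z ^ (n + 2)‖
      ≤ ∑' n : ℕ, ‖(((n + 2)! : ℝ))⁻¹ • Z ^ (n + 2)‖ := by
        apply norm_tsum_le_tsum_norm
        exact hsum.of_nonneg_of_le (fun n => norm_nonneg _) hb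
    _ ≤ ∑' n : ℕ, ‖Z‖ ^ 2 * (‖Z‖ ^ n / n !) := by
        apply Summable.tsum_le_tsum hb _ hsum
        exact hsum.of_nonneg_of_le (fun n => norm_nonneg _) hb
    _ = ‖Z‖ ^ 2 * Real.exp ‖Z‖ := by
        rw [tsum_mul_left, Real.exp_eq_exp_ℝ, exp_eq_tsum_div]

theorem pow_sub_pow_norm_le (a b : 𝔸) (h1 : ‖(1:𝔸)‖ ≤ 1)
    (ha : ‖a‖ ≤ 1) (hb : ‖b‖ ≤ 1) (n : ℕ) :
    ‖a ^ n - b ^ n‖ ≤ n * ‖a - b‖ := by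
  have hbn : ∀ m : ℕ, ‖b ^ m‖ ≤ 1 := by
    intro m
    induction m with
    | zero => simpa using h1
    | succ m ihm =>
      rw [pow_succ]
      calc ‖b ^ m * b‖ ≤ ‖b ^ m‖ * ‖b‖ := norm_mul_le _ _
        _ ≤ 1 * 1 := mul_le_mul ihm hb (norm_nonneg _) zero_le_one
        _ = 1 := one_mul 1
  induction n with
  | zero => simp
  | succ n ih =>
    have hid : a ^ (n + 1) - b ^ (n + 1) = a * (a ^ n - b ^ n) + (a - b) * b ^ n := by
      rw [pow_succ' a n, pow_succ' b n, mul_sub, sub_mul]; abel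
    rw [hid]
    calc ‖a * (a ^ n - b ^ n) + (a - b) * b ^ n‖
        ≤ ‖a * (a ^ n - b ^ n)‖ + ‖(a - b) * b ^ n‖ := norm_add_le _ _
      _ ≤ ‖a‖ * ‖a ^ n - b ^ n‖ + ‖a - b‖ * ‖b ^ n‖ := by
          gcongr <;> exact norm_mul_le _ _
      _ ≤ 1 * (n * ‖a - b‖) + ‖a - b‖ * 1 :=
          add_le_add
            (mul_le_mul ha ih (norm_nonneg _) zero_le_one)
            (mul_le_mul_of_nonneg_left (hbn n) (norm_nonneg _))
      _ = (n + 1 : ℕ) * ‖a - b‖ := by push_cast; ring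

theorem exp_sub_exp_norm_le_of_dissipative (P Q : 𝔸) (h1 : ‖(1:𝔸)‖ ≤ 1)
    (hP : ∀ α : ℝ, 0 ≤ α → ‖exp (α • P)‖ ≤ 1)
    (hQ : ∀ α : ℝ, 0 ≤ α → ‖exp (α • Q)‖ ≤ 1) :
    ‖exp P - exp Q‖ ≤ ‖P - Q‖ := by
  set C : ℝ := ‖P‖ ^ 2 * Real.exp ‖P‖ + ‖Q‖ ^ 2 * Real.exp ‖Q‖ with hC
  have hC0 : 0 ≤ C := by positivity
  have key : ∀ n : ℕ, 1 ≤ n → ‖exp P - exp Q‖ ≤ ‖P - Q‖ + C / n := by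
    intro n hn
    have hn0 : (0:ℝ) < n := by exact_mod_cast hn
    have hninv : (0:ℝ) ≤ (n:ℝ)⁻¹ := by positivity
    have hninv1 : (n:ℝ)⁻¹ ≤ 1 := by
      rw [inv_le_one_iff₀]; right; exact_mod_cast hn
    set a := exp ((n:ℝ)⁻¹ • P)
    set b := exp ((n:ℝ)⁻¹ • Q)
    have hea : exp P = a ^ n := by
      letI : NormedAlgebra ℚ 𝔸 := NormedAlgebra.restrictScalars ℚ ℝ 𝔸
      rw [← exp_nsmul, ← Nat.cast_smul_eq_nsmul ℝ, smul_smul,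
        mul_inv_cancel₀ (ne_of_gt hn0), one_smul]
    have heb : exp Q = b ^ n := by
      letI : NormedAlgebra ℚ 𝔸 := NormedAlgebra.restrictScalars ℚ ℝ 𝔸
      rw [← exp_nsmul, ← Nat.cast_smul_eq_nsmul ℝ, smul_smul,
        mul_inv_cancel₀ (ne_of_gt hn0), one_smul]
    have hab : ‖a - b‖ ≤ (n:ℝ)⁻¹ * ‖P - Q‖ + (n:ℝ)⁻¹ ^ 2 * C := by
      have hRa := exp_remainder_bound ((n:ℝ)⁻¹ • P)
      have hRb := exp_remainder_bound ((n:ℝ)⁻¹ • Q)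
      have hdecomp : a - b = ((n:ℝ)⁻¹ • P - (n:ℝ)⁻¹ • Q)
          + ((exp ((n:ℝ)⁻¹ • P) - 1 - (n:ℝ)⁻¹ • P)
            - (exp ((n:ℝ)⁻¹ • Q) - 1 - (n:ℝ)⁻¹ • Q)) := by
        simp only [a, b]; abel
      rw [hdecomp]
      have hnP : ‖(n:ℝ)⁻¹ • P‖ = (n:ℝ)⁻¹ * ‖P‖ := by
        rw [norm_smul, Real.norm_eq_abs, abs_of_nonneg hninv]
      have hnQ : ‖(n:ℝ)⁻¹ • Q‖ = (n:ℝ)⁻¹ * ‖Q‖ := by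
        rw [norm_smul, Real.norm_eq_abs, abs_of_nonneg hninv]
      calc ‖((n:ℝ)⁻¹ • P - (n:ℝ)⁻¹ • Q) + _‖
          ≤ ‖(n:ℝ)⁻¹ • P - (n:ℝ)⁻¹ • Q‖
            + (‖exp ((n:ℝ)⁻¹ • P) - 1 - (n:ℝ)⁻¹ • P‖
              + ‖exp ((n:ℝ)⁻¹ • Q) - 1 - (n:ℝ)⁻¹ • Q‖) :=
            (norm_add_le _ _).trans (by gcongr; exact norm_sub_le _ _)
        _ ≤ (n:ℝ)⁻¹ * ‖P - Q‖
            + (‖(n:ℝ)⁻¹ • P‖ ^ 2 * Real.exp ‖(n:ℝ)⁻¹ • P‖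
              + ‖(n:ℝ)⁻¹ • Q‖ ^ 2 * Real.exp ‖(n:ℝ)⁻¹ • Q‖) := by
            gcongr
            rw [← smul_sub, norm_smul, Real.norm_eq_abs, abs_of_nonneg hninv]
        _ ≤ (n:ℝ)⁻¹ * ‖P - Q‖ + (n:ℝ)⁻¹ ^ 2 * C := by
            gcongr _ + ?_
            rw [hnP, hnQ, hC]
            have e1 : Real.exp ((n:ℝ)⁻¹ * ‖P‖) ≤ Real.exp ‖P‖ := by
              apply Real.exp_le_exp.mpr
              nlinarith [norm_nonneg P]
            have e2 : Real.exp ((n:ℝ)⁻¹ * ‖Q‖) ≤ Real.exp ‖Q‖ := by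
              apply Real.exp_le_exp.mpr
              nlinarith [norm_nonneg Q]
            have p1 : ((n:ℝ)⁻¹ * ‖P‖) ^ 2 ≤ (n:ℝ)⁻¹ ^ 2 * ‖P‖ ^ 2 := by ring_nf; rfl
            nlinarith [Real.exp_pos ‖P‖, Real.exp_pos ‖Q‖, sq_nonneg ((n:ℝ)⁻¹),
              norm_nonneg P, norm_nonneg Q, Real.exp_pos ((n:ℝ)⁻¹ * ‖P‖),
              Real.exp_pos ((n:ℝ)⁻¹ * ‖Q‖), sq_nonneg ‖P‖, sq_nonneg ‖Q‖]
    calc ‖exp P - exp Q‖ = ‖a ^ n - b ^ n‖ := by rw [hea, heb]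
      _ ≤ n * ‖a - b‖ := pow_sub_pow_norm_le a b h1 (hP _ hninv) (hQ _ hninv) n
      _ ≤ n * ((n:ℝ)⁻¹ * ‖P - Q‖ + (n:ℝ)⁻¹ ^ 2 * C) := by gcongr
      _ = ‖P - Q‖ + (n:ℝ)⁻¹ * C := by field_simp
      _ = ‖P - Q‖ + C / n := by rw [div_eq_mul_inv]; ring
  have hlim : Filter.Tendsto (fun n : ℕ => ‖P - Q‖ + C / n) Filter.atTop
      (nhds (‖P - Q‖)) := by
    have := tendsto_const_div_atTop_nhds_zero_nat C
    simpa using Filter.Tendsto.const_add (‖P - Q‖) this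
  apply ge_of_tendsto hlim
  filter_upwards [Filter.eventually_ge_atTop 1] with n hn using key n hn

end Aux

/-- Let `(Ω, ⪯)` be a linear order and `{A(u,v)}_{u ⪯ v}` an additive family of
dissipative bounded operators on a Banach space (dissipativity encoded as: `e^{αA}` is a
contraction for all `α ≥ 0`).  Then for all `u' ⪯ u ⪯ v ⪯ v'`:
`‖e^{A(u',v')} − e^{A(u,v)}‖ ≤ ‖A(u',u)‖ + ‖A(v,v')‖`. -/
theorem additive_dissipative_exp_estimate {Ω X : Type*} [LinearOrder Ω]
    [NormedAddCommGroup X] [NormedSpace ℝ X] [CompleteSpace X]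
    (A : Ω → Ω → X →L[ℝ] X)
    (hdiss : ∀ u v : Ω, u ≤ v → ∀ α : ℝ, 0 ≤ α → ‖(expSeries ℝ (X →L[ℝ] X)).sum (α • A u v)‖ ≤ 1)
    (hadd : ∀ u v w : Ω, u ≤ v → v ≤ w → A u w = A u v + A v w) :
    ∀ u' u v v' : Ω, u' ≤ u → u ≤ v → v ≤ v' →
      ‖(expSeries ℝ (X →L[ℝ] X)).sum (A u' v') - (expSeries ℝ (X →L[ℝ] X)).sum (A u v)‖ ≤ ‖A u' u‖ + ‖A v v'‖ := by
  intro u' u v v' h1 h2 h3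
  simp only [← exp_eq_expSeries_sum ℝ] at hdiss ⊢
  have h1' : ‖(1 : X →L[ℝ] X)‖ ≤ 1 := by
    rw [ContinuousLinearMap.one_def]; exact ContinuousLinearMap.norm_id_le
  have hsplit : A u' v' = A u' u + (A u v + A v v') := by
    rw [← hadd u v v' h2 h3, ← hadd u' u v' h1 (le_trans h2 h3)]
  have hdiff : A u' v' - A u v = A u' u + A v v' := by
    rw [hsplit]; abel
  calc ‖exp (A u' v') - exp (A u v)‖
      ≤ ‖A u' v' - A u v‖ :=
        exp_sub_exp_norm_le_of_dissipative _ _ h1'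
          (hdiss u' v' (le_trans h1 (le_trans h2 h3))) (hdiss u v h2)
    _ = ‖A u' u + A v v'‖ := by rw [hdiff]
    _ ≤ ‖A u' u‖ + ‖A v v'‖ := norm_add_le _ _
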